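/- For every integer n ≥ 2, the algebra B has level one: the closure of the GL(V)-orbit of the structure of B equals the union of that orbit with the single point 0 (the zero multiplication). -/

import Mathlib

open Function Submodule

/-! Common framework: `V = ℂ^{n+1}`, `n`-ary multiplications as functions
`(Fin n → V) → V`, the action of `GL(V)` on them, orbits, and the
(n+1)-dimensional n-ary Filippov algebras of Kaygorodov–Volkov, each described
as an alternating `n`-linear map by its values on the increasing tuples of
distinct standard basis vectors (0-indexed: `bt n j` is the tuple omitting `e j`). -/

/-- The underlying space `V = ℂ^{n+1}`. -/
abbrev nV (n : ℕ) : Type := Fin (n + 1) → ℂ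

/-- The `j`-th standard basis vector of `V` (0-indexed). -/
def sb (n : ℕ) (j : Fin (n + 1)) : nV n := Pi.single j 1

/-- The increasing `n`-tuple of standard basis vectors omitting `e j`. -/
def bt (n : ℕ) (j : Fin (n + 1)) : Fin n → nV n := fun k => sb n (j.succAbove k)

/-- The action of `GL(V)` (invertible linear maps) on `n`-ary multiplications:
`(g • μ)(x₁, …, xₙ) = g (μ (g⁻¹ x₁, …, g⁻¹ xₙ))`. -/
noncomputable def glAct (n : ℕ) (g : nV n ≃ₗ[ℂ] nV n) (μ : (Fin n → nV n) → nV n) :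
    (Fin n → nV n) → nV n :=
  fun x => g (μ fun i => g.symm (x i))

/-- The `GL(V)`-orbit of an `n`-ary multiplication. -/
def glOrbit (n : ℕ) (μ : (Fin n → nV n) → nV n) : Set ((Fin n → nV n) → nV n) :=
  {ν | ∃ g : nV n ≃ₗ[ℂ] nV n, ν = glAct n g μ}

/-- The algebra `B`: `[e₂, …, e_{n+1}] = e₁` (0-indexed: the tuple omitting `e 0`
maps to `e 0`), all other increasing basis products zero. -/
def IsB (n : ℕ) (μ : AlternatingMap ℂ (nV n) (nV n) (Fin n)) : Prop :=
  μ (bt n 0) = sb n 0 ∧ ∀ j : Fin (n + 1), j ≠ 0 → μ (bt n j) = 0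

/-- The algebra `C₁`: `[e₂, …, e_{n+1}] = e₁`, `[e₁, e₃, …, e_{n+1}] = e₂`. -/
def IsC1 (n : ℕ) (μ : AlternatingMap ℂ (nV n) (nV n) (Fin n)) : Prop :=
  μ (bt n 0) = sb n 0 ∧ μ (bt n 1) = sb n 1 ∧
    ∀ j : Fin (n + 1), j ≠ 0 → j ≠ 1 → μ (bt n j) = 0

/-- The algebra `C₂(α)`: `[e₂, …, e_{n+1}] = α e₁ + e₂`, `[e₁, e₃, …, e_{n+1}] = e₂`. -/
def IsC2 (n : ℕ) (α : ℂ) (μ : AlternatingMap ℂ (nV n) (nV n) (Fin n)) : Prop :=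
  μ (bt n 0) = α • sb n 0 + sb n 1 ∧ μ (bt n 1) = sb n 1 ∧
    ∀ j : Fin (n + 1), j ≠ 0 → j ≠ 1 → μ (bt n j) = 0

/-- The algebra `C₃`: `[e₁, e₃, …, e_{n+1}] = e₁`, `[e₂, e₃, …, e_{n+1}] = e₂`. -/
def IsC3 (n : ℕ) (μ : AlternatingMap ℂ (nV n) (nV n) (Fin n)) : Prop :=
  μ (bt n 1) = sb n 0 ∧ μ (bt n 0) = sb n 1 ∧
    ∀ j : Fin (n + 1), j ≠ 0 → j ≠ 1 → μ (bt n j) = 0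

/-- The algebra `D_r`: `[e₁, …, e_{i-1}, e_{i+1}, …, e_{n+1}] = e_i` for `1 ≤ i ≤ r`
(0-indexed: the tuple omitting `e j` maps to `e j` for `j < r` and to `0` otherwise). -/
def IsD (n r : ℕ) (μ : AlternatingMap ℂ (nV n) (nV n) (Fin n)) : Prop :=
  ∀ j : Fin (n + 1), ((j : ℕ) < r → μ (bt n j) = sb n j) ∧ (r ≤ (j : ℕ) → μ (bt n j) = 0)

-- ## helper lemmas

lemma sum_smul_sb (n : ℕ) (u : nV n) : ∑ i, u i • sb n i = u := by
  funext j
  simp [sb, Finset.sum_apply, Pi.single_apply, mul_comm]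

lemma ext_bt {n : ℕ} {W : Type} [AddCommGroup W] [Module ℂ W]
    (A B : AlternatingMap ℂ (nV n) W (Fin n))
    (h : ∀ j, A (bt n j) = B (bt n j)) : A = B := by
  apply Module.Basis.ext_alternating (Pi.basisFun ℂ (Fin (n+1)))
  intro v hv
  have hns : ¬ Function.Surjective v := by
    intro hs
    have := Fintype.card_le_of_surjective v hs
    simp at this
  rw [Function.Surjective] at hns
  push_neg at hns
  obtain ⟨j, hj⟩ := hns
  choose σ hσ using fun k => Fin.exists_succAbove_eq (hj k)
  have hinj : Function.Injective σ := fun a b hab => hv (by rw [← hσ a, ← hσ b, hab])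
  let e : Equiv.Perm (Fin n) := Equiv.ofBijective σ ((Finite.injective_iff_bijective).mp hinj)
  have key : (fun i => (Pi.basisFun ℂ (Fin (n+1))) (v i)) = bt n j ∘ e := by
    funext k
    simp only [Pi.basisFun_apply, Function.comp_apply, bt]
    show Pi.single (v k) 1 = sb n (j.succAbove (σ k))
    rw [hσ k]; rfl
  rw [key]
  show A (bt n j ∘ e) = B (bt n j ∘ e)
  rw [A.map_perm (bt n j) e, B.map_perm (bt n j) e, h j]





noncomputable def Fdet (n : ℕ) : AlternatingMap ℂ (nV n) ℂ (Fin n) :=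
  (Matrix.detRowAlternating).compLinearMap (LinearMap.funLeft ℂ ℂ Fin.succ)

lemma Fdet_apply (n : ℕ) (x : Fin n → nV n) :
    Fdet n x = Matrix.det (Matrix.of fun k i => x k (Fin.succ i)) := rfl

lemma Fdet_zero_of_sb0 (n : ℕ) (x : Fin n → nV n) (k : Fin n) (h : x k = sb n 0) :
    Fdet n x = 0 := by
  rw [Fdet_apply]
  apply Matrix.det_eq_zero_of_row_eq_zero k
  intro i
  simp [h, sb, Pi.single_apply, Fin.succ_ne_zero]

lemma Fdet_bt0 (n : ℕ) : Fdet n (bt n 0) = 1 := by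
  rw [Fdet_apply]
  have : (Matrix.of fun k i => bt n 0 k (Fin.succ i)) = (1 : Matrix (Fin n) (Fin n) ℂ) := by
    ext k i
    simp [bt, sb, Pi.single_apply, Matrix.one_apply, Fin.succ_inj, eq_comm]
  rw [this, Matrix.det_one]

lemma bt_zero_of_ne (n : ℕ) (j : Fin (n+1)) (hj : j ≠ 0) (h0 : 0 < n) :
    bt n j ⟨0, h0⟩ = sb n 0 := by
  have : j.succAbove ⟨0, h0⟩ = 0 := by
    rw [Fin.succAbove_of_castSucc_lt]
    · rfl
    · exact lt_of_le_of_ne (Fin.zero_le _) (fun h => hj (h.symm.trans rfl))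
  rw [bt, this]




def MLp (n : ℕ) (ν : (Fin n → nV n) → nV n) : Prop :=
  (∀ (x : Fin n → nV n) (i : Fin n) (c : ℂ) (u v : nV n),
      ν (update x i (c • u + v)) = c • ν (update x i u) + ν (update x i v)) ∧
  (∀ (x : Fin n → nV n) (i j : Fin n), i ≠ j → x i = x j → ν x = 0)

lemma mlp_of_alt {n : ℕ} (A : AlternatingMap ℂ (nV n) (nV n) (Fin n)) : MLp n ⇑A :=
  ⟨fun x i c u v => by rw [A.map_update_add, A.map_update_smul],
   fun x i j hij hx => A.map_eq_zero_of_eq x hx hij⟩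

lemma mlp_update_zero {n : ℕ} {ν : (Fin n → nV n) → nV n} (h : MLp n ν)
    (x : Fin n → nV n) (i : Fin n) : ν (update x i 0) = 0 := by
  have := h.1 x i 1 0 0
  simp only [one_smul, add_zero, smul_zero] at this
  exact left_eq_add.mp this

lemma mlp_update_smul {n : ℕ} {ν : (Fin n → nV n) → nV n} (h : MLp n ν)
    (x : Fin n → nV n) (i : Fin n) (c : ℂ) (a : nV n) :
    ν (update x i (c • a)) = c • ν (update x i a) := by
  simpa [mlp_update_zero h] using h.1 x i c a 0

lemma mlp_update_add {n : ℕ} {ν : (Fin n → nV n) → nV n} (h : MLp n ν)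
    (x : Fin n → nV n) (i : Fin n) (a b : nV n) :
    ν (update x i (a + b)) = ν (update x i a) + ν (update x i b) := by
  simpa using h.1 x i 1 a b

noncomputable def mkAlt (n : ℕ) (ν : (Fin n → nV n) → nV n) (h : MLp n ν) :
    AlternatingMap ℂ (nV n) (nV n) (Fin n) where
  toFun := ν
  map_update_add' := by
    intro dec x i a b
    rw [Subsingleton.elim dec (instDecidableEqFin n)]
    exact mlp_update_add h x i a b
  map_update_smul' := by
    intro dec x i c a
    rw [Subsingleton.elim dec (instDecidableEqFin n)]
    exact mlp_update_smul h x i c a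
  map_eq_zero_of_eq' := fun x i j hx hij => h.2 x i j hij hx

def Sset (n : ℕ) (h0 : 0 < n) : Set ((Fin n → nV n) → nV n) :=
  {ν | MLp n ν ∧ (∀ x y i j, ν x i * ν y j = ν y i * ν x j) ∧
    (∀ x y, (∑ i, ν x i • ν (update y ⟨0, h0⟩ (sb n i))) = 0)}

lemma isClosed_S (n : ℕ) (h0 : 0 < n) : IsClosed (Sset n h0) := by
  have e : Sset n h0 =
      (⋂ (x : Fin n → nV n) (i : Fin n) (c : ℂ) (u : nV n) (v : nV n),
        {ν : (Fin n → nV n) → nV n |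
          ν (update x i (c • u + v)) = c • ν (update x i u) + ν (update x i v)}) ∩
      ((⋂ (x : Fin n → nV n) (i : Fin n) (j : Fin n),
        {ν : (Fin n → nV n) → nV n | i ≠ j → x i = x j → ν x = 0}) ∩
      ((⋂ (x : Fin n → nV n) (y : Fin n → nV n) (i : Fin (n+1)) (j : Fin (n+1)),
        {ν : (Fin n → nV n) → nV n | ν x i * ν y j = ν y i * ν x j}) ∩
      (⋂ (x : Fin n → nV n) (y : Fin n → nV n),
        {ν : (Fin n → nV n) → nV n |
          (∑ i, ν x i • ν (update y ⟨0, h0⟩ (sb n i))) = 0}))) := by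
    ext ν
    simp only [Sset, Set.mem_inter_iff, Set.mem_iInter, Set.mem_setOf_eq, MLp]
    tauto
  rw [e]
  refine IsClosed.inter ?_ (IsClosed.inter ?_ (IsClosed.inter ?_ ?_))
  · refine isClosed_iInter fun x => isClosed_iInter fun i => isClosed_iInter fun c =>
      isClosed_iInter fun u => isClosed_iInter fun v => ?_
    exact isClosed_eq (continuous_apply _)
      (((continuous_apply (update x i u)).const_smul c).add (continuous_apply (update x i v)))
  · refine isClosed_iInter fun x => isClosed_iInter fun i => isClosed_iInter fun j => ?_
    by_cases h : i ≠ j ∧ x i = x j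
    · have : {ν : (Fin n → nV n) → nV n | i ≠ j → x i = x j → ν x = 0}
          = {ν | ν x = 0} := by ext ν; simp [h.1, h.2]
      rw [this]
      exact isClosed_eq (continuous_apply _) continuous_const
    · have : {ν : (Fin n → nV n) → nV n | i ≠ j → x i = x j → ν x = 0}
          = Set.univ := by
        ext ν; simp only [Set.mem_setOf_eq, Set.mem_univ, iff_true]
        intro h1 h2; exact absurd ⟨h1, h2⟩ h
      rw [this]; exact isClosed_univ
  · refine isClosed_iInter fun x => isClosed_iInter fun y => isClosed_iInter fun i =>
      isClosed_iInter fun j => ?_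
    exact isClosed_eq (by fun_prop) (by fun_prop)
  · refine isClosed_iInter fun x => isClosed_iInter fun y => ?_
    refine isClosed_eq (continuous_finset_sum _ fun i _ => ?_) continuous_const
    fun_prop
-- continuation: μ characterization, orbit ⊆ S, zero limit, classification
lemma alt_map_update_sum {n : ℕ} {W : Type} [AddCommGroup W] [Module ℂ W]
    (A : AlternatingMap ℂ (nV n) W (Fin n)) {α : Type} (t : Finset α) (i : Fin n)
    (g : α → nV n) (m : Fin n → nV n) :
    A (update m i (∑ a ∈ t, g a)) = ∑ a ∈ t, A (update m i (g a)) :=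
  A.toMultilinearMap.map_update_sum t i g m

lemma muEq {n : ℕ} (h0 : 0 < n) (μ : AlternatingMap ℂ (nV n) (nV n) (Fin n))
    (hμ : IsB n μ) : ∀ y, μ y = Fdet n y • sb n 0 := by
  have : μ = (LinearMap.toSpanSingleton ℂ (nV n) (sb n 0)).compAlternatingMap (Fdet n) := by
    apply ext_bt
    intro j
    rw [LinearMap.compAlternatingMap_apply, LinearMap.toSpanSingleton_apply]
    by_cases hj : j = 0
    · subst hj; rw [hμ.1, Fdet_bt0, one_smul]
    · rw [hμ.2 j hj, Fdet_zero_of_sb0 n _ ⟨0, h0⟩ (bt_zero_of_ne n j hj h0), zero_smul]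
  intro y
  rw [this, LinearMap.compAlternatingMap_apply, LinearMap.toSpanSingleton_apply]

lemma orbit_sub_S {n : ℕ} (h0 : 0 < n) (μ : AlternatingMap ℂ (nV n) (nV n) (Fin n))
    (hμ : IsB n μ) : glOrbit n ⇑μ ⊆ Sset n h0 := by
  rintro ν ⟨g, rfl⟩
  set z0 : Fin n := ⟨0, h0⟩ with hz0
  have hmu := muEq h0 μ hμ
  set A : AlternatingMap ℂ (nV n) (nV n) (Fin n) :=
    (g.toLinearMap).compAlternatingMap (μ.compLinearMap g.symm.toLinearMap) with hA
  have hAcoe : glAct n g ⇑μ = ⇑A := by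
    funext x
    simp [glAct, hA]
  have hform : ∀ x, A x = (Fdet n fun i => g.symm (x i)) • g (sb n 0) := by
    intro x
    rw [hA]
    simp only [LinearMap.compAlternatingMap_apply, AlternatingMap.compLinearMap_apply,
      LinearEquiv.coe_coe]
    rw [hmu, map_smul]
  have hw : ∀ y, A (update y z0 (g (sb n 0))) = 0 := by
    intro y
    have harg : (fun i => g.symm (update y z0 (g (sb n 0)) i))
        = update (fun i => g.symm (y i)) z0 (sb n 0) := by
      funext i
      have := Function.apply_update (fun _ v => g.symm v) y z0 (g (sb n 0)) i
      simpa using this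
    rw [hA]
    simp only [LinearMap.compAlternatingMap_apply, AlternatingMap.compLinearMap_apply,
      LinearEquiv.coe_coe]
    rw [harg, hmu, Fdet_zero_of_sb0 n _ z0 (by rw [update_self]), zero_smul, map_zero]
  refine ⟨?_, ?_, ?_⟩
  · rw [hAcoe]; exact mlp_of_alt A
  · intro x y i j
    rw [hAcoe]
    rw [hform x, hform y]
    simp only [Pi.smul_apply, smul_eq_mul]
    ring
  · intro x y
    rw [hAcoe]
    have step : ∑ i, A x i • A (update y z0 (sb n i)) = A (update y z0 (A x)) := by
      conv_rhs => rw [← sum_smul_sb n (A x)]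
      rw [alt_map_update_sum A Finset.univ z0 (fun i => A x i • sb n i) y]
      apply Finset.sum_congr rfl
      intro i _
      exact (A.map_update_smul y z0 (A x i) (sb n i)).symm
    rw [step, hform x, A.map_update_smul, hw y, smul_zero]
-- zero in closure
noncomputable def smulEquiv (n : ℕ) (c : ℂ) (hc : c ≠ 0) : nV n ≃ₗ[ℂ] nV n where
  toFun v := c • v
  map_add' := smul_add c
  map_smul' a v := smul_comm c a v
  invFun v := c⁻¹ • v
  left_inv v := by simp [smul_smul, inv_mul_cancel₀ hc]
  right_inv v := by simp [smul_smul, mul_inv_cancel₀ hc]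

lemma smul_mem_orbit {n : ℕ} (h0 : 0 < n) (μ : AlternatingMap ℂ (nV n) (nV n) (Fin n))
    (c : ℂ) (hc : c ≠ 0) : ((c⁻¹) ^ (n - 1)) • ⇑μ ∈ glOrbit n ⇑μ := by
  refine ⟨smulEquiv n c hc, ?_⟩
  funext x
  have hs : (smulEquiv n c hc).symm = fun v : nV n => c⁻¹ • v := rfl
  show (c⁻¹) ^ (n-1) • μ x = (smulEquiv n c hc) (μ fun i => (smulEquiv n c hc).symm (x i))
  have : (μ fun i => (smulEquiv n c hc).symm (x i)) = (∏ _i : Fin n, c⁻¹) • μ x := by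
    have := μ.toMultilinearMap.map_smul_univ (fun _ : Fin n => c⁻¹) x
    simpa [hs] using this
  rw [this]
  show (c⁻¹) ^ (n-1) • μ x = c • ((∏ _i : Fin n, c⁻¹) • μ x)
  rw [Finset.prod_const, Finset.card_univ, Fintype.card_fin, smul_smul]
  congr 1
  rw [show n = (n-1)+1 by omega, pow_succ]
  field_simp
  rw [Nat.add_sub_cancel]
lemma S_sub_orbit {n : ℕ} (h0 : 0 < n) (μ : AlternatingMap ℂ (nV n) (nV n) (Fin n))
    (hμ : IsB n μ) : Sset n h0 ⊆ glOrbit n ⇑μ ∪ {(0 : (Fin n → nV n) → nV n)} := by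
  intro ν hν
  by_cases hz : ν = 0
  · right; exact hz
  left
  obtain ⟨hml, hr1, hann⟩ := hν
  set z0 : Fin n := ⟨0, h0⟩ with hz0
  have hex : ∃ x0, ν x0 ≠ 0 := by
    by_contra h; push_neg at h; exact hz (funext fun x => h x)
  obtain ⟨x0, hx0⟩ := hex
  set w := ν x0 with hw
  have hwne : w ≠ 0 := hx0
  set N := mkAlt n ν hml with hNdef
  have hN : ⇑N = ν := rfl
  -- annihilation at slot z0
  have hw0 : ∀ y, N (update y z0 w) = 0 := by
    intro y
    have h1 : ∑ i, ν x0 i • ν (update y z0 (sb n i)) = 0 := hann x0 y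
    have h2 : N (update y z0 w) = ∑ i, ν x0 i • ν (update y z0 (sb n i)) := by
      conv_lhs => rw [show w = ∑ i, w i • sb n i from (sum_smul_sb n w).symm]
      rw [alt_map_update_sum N Finset.univ z0 (fun i => w i • sb n i) y]
      apply Finset.sum_congr rfl
      intro i _
      exact N.map_update_smul y z0 (w i) (sb n i)
    rw [h2, h1]
  have hwany : ∀ (t : Fin n → nV n) (k : Fin n), t k = w → N t = 0 := by
    intro t k hk
    by_cases hkz : k = z0
    · have : t = update t z0 w := by rw [← hkz, ← hk, update_eq_self]
      rw [this]; exact hw0 t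
    · set u := t ∘ (Equiv.swap z0 k) with hu
      have hu0 : u = update u z0 w := by
        have : u z0 = w := by simp [hu, Equiv.swap_apply_left, hk]
        rw [← this, update_eq_self]
      have hNu : N u = 0 := by rw [hu0]; exact hw0 u
      have := N.map_swap t (fun h => hkz h.symm : z0 ≠ k)
      rw [← hu] at this
      rw [hNu] at this
      exact (neg_eq_zero.mp this.symm)
  -- the basis
  set v : Fin (n+1) → nV n := Fin.cons w x0 with hv
  have hv0 : v 0 = w := rfl
  have hvsucc : ∀ k : Fin n, v k.succ = x0 k := fun k => rfl
  have li : LinearIndependent ℂ v := by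
    rw [Fintype.linearIndependent_iff]
    intro c hc
    have hsucc : ∀ k : Fin n, c k.succ = 0 := by
      intro k
      have e1 : N (update x0 k (∑ i, c i • v i)) = 0 := by
        rw [hc]
        exact mlp_update_zero hml x0 k
      have e2 : N (update x0 k (∑ i, c i • v i)) = ∑ i, c i • N (update x0 k (v i)) := by
        rw [alt_map_update_sum N Finset.univ k (fun i => c i • v i) x0]
        apply Finset.sum_congr rfl
        intro i _
        exact N.map_update_smul x0 k (c i) (v i)
      have e3 : ∀ i, c i • N (update x0 k (v i)) = if i = k.succ then c i • w else 0 := by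
        intro i
        induction i using Fin.cases with
        | zero =>
          rw [hv0, hwany (update x0 k w) k (update_self k w x0)]
          simp [(Fin.succ_ne_zero k).symm]
        | succ m =>
          by_cases hm : m = k
          · subst hm
            rw [hvsucc, update_eq_self]
            simp [hN, ← hw]
          · rw [hvsucc]
            have : N (update x0 k (x0 m)) = 0 := by
              apply N.map_eq_zero_of_eq (i := k) (j := m)
              · rw [update_self, update_of_ne hm]
              · exact fun h => hm h.symm
            rw [this]
            simp [Fin.succ_inj, hm]
      have : (0 : nV n) = c k.succ • w := by
        rw [← e1, e2]
        rw [Finset.sum_congr rfl fun i _ => e3 i]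
        rw [Finset.sum_ite_eq' Finset.univ k.succ (fun i => c i • w)]
        simp
      rcases smul_eq_zero.mp this.symm with h | h
      · exact h
      · exact absurd h hwne
    have h00 : c 0 • w = 0 := by
      have := hc
      rw [Fin.sum_univ_succ] at this
      simpa [hsucc, hv0] using this
    have hc0 : c 0 = 0 := by
      rcases smul_eq_zero.mp h00 with h | h
      · exact h
      · exact absurd h hwne
    intro i
    induction i using Fin.cases with
    | zero => exact hc0
    | succ m => exact hsucc m
  have hcard : Fintype.card (Fin (n+1)) = Module.finrank ℂ (nV n) := by
    simp [Module.finrank_fin_fun]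
  set Bv := basisOfLinearIndependentOfCardEqFinrank li hcard with hBvdef
  have hBv : ⇑Bv = v := coe_basisOfLinearIndependentOfCardEqFinrank li hcard
  set g : nV n ≃ₗ[ℂ] nV n := (Pi.basisFun ℂ (Fin (n+1))).equiv Bv (Equiv.refl _) with hgdef
  have hg : ∀ j, g (sb n j) = v j := by
    intro j
    have h1 : sb n j = (Pi.basisFun ℂ (Fin (n+1))) j := by
      rw [Pi.basisFun_apply]; rfl
    rw [h1, hgdef, Module.Basis.equiv_apply, Equiv.refl_apply, hBv]
  refine ⟨g, ?_⟩
  set A : AlternatingMap ℂ (nV n) (nV n) (Fin n) :=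
    (g.symm.toLinearMap).compAlternatingMap (N.compLinearMap g.toLinearMap) with hAdef
  have hA_bt : ∀ j, A (bt n j) = g.symm (N fun k => v (j.succAbove k)) := by
    intro j
    rw [hAdef]
    simp only [LinearMap.compAlternatingMap_apply, AlternatingMap.compLinearMap_apply,
      LinearEquiv.coe_coe]
    congr 2
    funext k
    exact hg (j.succAbove k)
  have hμA : μ = A := by
    apply ext_bt
    intro j
    rw [hA_bt j]
    by_cases hj : j = 0
    · subst hj
      have ht : (fun k => v ((0 : Fin (n+1)).succAbove k)) = x0 := by
        funext k
        rw [Fin.zero_succAbove]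
        exact hvsucc k
      rw [hμ.1, ht]
      have : N x0 = w := rfl
      rw [this]
      have := hg 0
      rw [hv0] at this
      rw [← this, LinearEquiv.symm_apply_apply]
    · rw [hμ.2 j hj]
      have : N (fun k => v (j.succAbove k)) = 0 := by
        apply hwany _ z0
        show v (j.succAbove z0) = w
        have hs : j.succAbove z0 = 0 := by
          rw [Fin.succAbove_of_castSucc_lt]
          · rfl
          · exact lt_of_le_of_ne (Fin.zero_le _)
              (fun h => hj (h.symm.trans rfl))
        rw [hs, hv0]
      rw [this, map_zero]
  have hAcoe : ⇑A = glAct n g.symm ν := by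
    funext x
    rw [hAdef]
    simp only [LinearMap.compAlternatingMap_apply, AlternatingMap.compLinearMap_apply,
      LinearEquiv.coe_coe, glAct, LinearEquiv.symm_symm, hN]
  have key : ⇑μ = glAct n g.symm ν := by rw [hμA, hAcoe]
  rw [key]
  funext x
  simp [glAct]
lemma zero_mem_closure_orbit {n : ℕ} (hn : 2 ≤ n) (μ : AlternatingMap ℂ (nV n) (nV n) (Fin n)) :
    (0 : (Fin n → nV n) → nV n) ∈ closure (glOrbit n ⇑μ) := by
  have h0 : 0 < n := by omega
  have hseq : ∀ k : ℕ, ((((k : ℂ) + 1)⁻¹) ^ (n - 1)) • ⇑μ ∈ glOrbit n ⇑μ := fun k =>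
    smul_mem_orbit h0 μ ((k : ℂ) + 1) (Nat.cast_add_one_ne_zero k)
  have h1 : Filter.Tendsto (fun k : ℕ => ((k : ℂ) + 1)⁻¹) Filter.atTop (nhds 0) := by
    rw [tendsto_zero_iff_norm_tendsto_zero]
    have he : (fun k : ℕ => ‖((k : ℂ) + 1)⁻¹‖) = fun k : ℕ => 1 / ((k : ℝ) + 1) := by
      funext k
      rw [norm_inv, show ((k:ℂ)+1) = ((k+1:ℕ):ℂ) by push_cast; ring, Complex.norm_natCast]
      push_cast
      rw [one_div]
    rw [he]
    exact tendsto_one_div_add_atTop_nhds_zero_nat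
  have h2 : Filter.Tendsto (fun k : ℕ => (((k : ℂ) + 1)⁻¹) ^ (n - 1)) Filter.atTop (nhds 0) := by
    have := h1.pow (n - 1)
    rwa [zero_pow (by omega : n - 1 ≠ 0)] at this
  have h3 : Filter.Tendsto (fun k : ℕ => ((((k : ℂ) + 1)⁻¹) ^ (n - 1)) • ⇑μ)
      Filter.atTop (nhds (0 : (Fin n → nV n) → nV n)) := by
    have := h2.smul_const (⇑μ)
    rwa [zero_smul] at this
  exact mem_closure_of_tendsto h3 (Filter.Eventually.of_forall hseq)


/-- For every integer `n ≥ 2`, the algebra `B` has level one: the closure of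
the `GL(V)`-orbit of the structure of `B` is the union of that orbit with the single point
`0` (the zero multiplication). -/
theorem B_has_level_one (n : ℕ) (hn : 2 ≤ n)
    (μ : AlternatingMap ℂ (nV n) (nV n) (Fin n)) (hμ : IsB n μ) :
    closure (glOrbit n ⇑μ) = glOrbit n ⇑μ ∪ {(0 : (Fin n → nV n) → nV n)} := by
  have h0 : 0 < n := by omega
  apply Set.Subset.antisymm
  · exact (closure_minimal (orbit_sub_S h0 μ hμ) (isClosed_S n h0)).trans
      (S_sub_orbit h0 μ hμ)
  · rintro ν (h | h)
    · exact subset_closure h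
    · rw [Set.mem_singleton_iff] at h
      subst h
      exact zero_mem_closure_orbit hn μ
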